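/- Let A = [[1,1],[0,1]] and B = [[1,0],[2−z,1]] in SL(2,ℂ), and let V = (A⁻¹B)^m (AB⁻¹)^m for a positive integer m. Then tr V = 2 + (z−2)²·S_{m−1}(z)², where S denotes the Chebyshev polynomials of the second kind. In particular if z is real then tr V ≥ 2. -/
import Mathlib

noncomputable def S : ℕ → ℂ → ℂ
  | 0 => fun _ => 1
  | 1 => fun q => q
  | (n + 2) => fun q => q * S (n + 1) q - S n q

lemma S_zero (q : ℂ) : S 0 q = 1 := rfl
lemma S_one (q : ℂ) : S 1 q = q := rfl
lemma S_add_two (n : ℕ) (q : ℂ) : S (n + 2) q = q * S (n + 1) q - S n q := rfl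

noncomputable def T : ℕ → ℂ → ℂ
  | 0 => fun _ => 0
  | (n + 1) => fun q => S n q

lemma S_ident (q : ℂ) : ∀ n, S (n+1) q ^ 2 - q * S (n+1) q * S n q + S n q ^ 2 = 1 := by
  intro n
  induction n with
  | zero => simp [S_zero, S_one]; ring
  | succ k ih =>
      rw [S_add_two]
      linear_combination ih

lemma ST_ident (q : ℂ) (n : ℕ) : S n q ^ 2 - q * S n q * T n q + T n q ^ 2 = 1 := by
  cases n with
  | zero => simp [S_zero, T]
  | succ k => exact S_ident q k

lemma S_succ_T (q : ℂ) (n : ℕ) : q * S n q - T n q = S (n+1) q := by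
  cases n with
  | zero => simp [S_zero, S_one, T]
  | succ k => rw [S_add_two]; rfl

lemma pow_formula (z : ℂ) (M : Matrix (Fin 2) (Fin 2) ℂ)
    (hM : M * M = z • M - 1) (n : ℕ) :
    M ^ (n + 1) = S n z • M - T n z • 1 := by
  induction n with
  | zero => simp [S_zero, T]
  | succ k ih =>
      rw [pow_succ, ih, sub_mul, smul_mul_assoc, smul_mul_assoc, hM, one_mul,
        smul_sub, ← S_succ_T z k, sub_smul, T]
      module

noncomputable def Sr : ℕ → ℝ → ℝ
  | 0 => fun _ => 1
  | 1 => fun q => q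
  | (n + 2) => fun q => q * Sr (n + 1) q - Sr n q

lemma S_real (x : ℝ) : ∀ n, S n (x : ℂ) = ((Sr n x : ℝ) : ℂ) := by
  intro n
  induction n using Nat.twoStepInduction with
  | zero => simp [S, Sr]
  | one => simp [S, Sr]
  | more k ih1 ih2 => rw [S_add_two, ih1, ih2, show Sr (k+2) x = x * Sr (k+1) x - Sr k x from rfl]; push_cast; ring

theorem stmt_16 (m : ℕ) (hm : 0 < m) (z : ℂ)
    (A B : Matrix (Fin 2) (Fin 2) ℂ)
    (hA : A = !![1, 1; 0, 1]) (hB : B = !![1, 0; 2 - z, 1]) :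
    Matrix.trace ((A⁻¹ * B) ^ m * (A * B⁻¹) ^ m) =
      2 + (z - 2) ^ 2 * S (m - 1) z ^ 2 ∧
    (∀ x : ℝ, z = (x : ℂ) → ∃ r : ℝ, 2 ≤ r ∧
      Matrix.trace ((A⁻¹ * B) ^ m * (A * B⁻¹) ^ m) = (r : ℂ)) := by
  have hAinv : A⁻¹ = !![1, -1; 0, 1] := by
    rw [Matrix.inv_def, hA, Matrix.adjugate_fin_two_of, Matrix.det_fin_two_of]
    norm_num
  have hBinv : B⁻¹ = !![1, 0; z - 2, 1] := by
    rw [Matrix.inv_def, hB, Matrix.adjugate_fin_two_of, Matrix.det_fin_two_of]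
    norm_num
  have h1 : A⁻¹ * B = !![z - 1, -1; 2 - z, 1] := by
    rw [hAinv, hB]
    ext i j; fin_cases i <;> fin_cases j <;>
      simp [Matrix.mul_apply, Fin.sum_univ_two] <;> ring
  have h2 : A * B⁻¹ = !![z - 1, 1; z - 2, 1] := by
    rw [hA, hBinv]
    ext i j; fin_cases i <;> fin_cases j <;>
      simp [Matrix.mul_apply, Fin.sum_univ_two] <;> ring
  set M₁ : Matrix (Fin 2) (Fin 2) ℂ := !![z - 1, -1; 2 - z, 1] with hM₁
  set M₂ : Matrix (Fin 2) (Fin 2) ℂ := !![z - 1, 1; z - 2, 1] with hM₂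
  have c1 : M₁ * M₁ = z • M₁ - 1 := by
    ext i j; fin_cases i <;> fin_cases j <;>
      simp [hM₁, Matrix.mul_apply, Fin.sum_univ_two, Matrix.one_apply] <;> ring
  have c2 : M₂ * M₂ = z • M₂ - 1 := by
    ext i j; fin_cases i <;> fin_cases j <;>
      simp [hM₂, Matrix.mul_apply, Fin.sum_univ_two, Matrix.one_apply] <;> ring
  obtain ⟨k, rfl⟩ : ∃ k, m = k + 1 := ⟨m - 1, (Nat.succ_pred_eq_of_pos hm).symm⟩
  have hm1 : k + 1 - 1 = k := rfl
  set s := S k z with hs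
  set t := T k z with ht
  have key : Matrix.trace ((A⁻¹ * B) ^ (k+1) * (A * B⁻¹) ^ (k+1))
      = 2 + (z - 2) ^ 2 * s ^ 2 := by
    rw [h1, h2, pow_formula z M₁ c1 k, pow_formula z M₂ c2 k, ← hs, ← ht]
    have ident := ST_ident z k
    rw [← hs, ← ht] at ident
    simp only [Matrix.trace_fin_two, Matrix.sub_apply, Matrix.smul_apply,
      Matrix.mul_apply, Fin.sum_univ_two, Matrix.sub_apply, Matrix.smul_apply,
      Matrix.one_apply, hM₁, hM₂]
    simp [Matrix.one_apply]
    linear_combination 2 * ident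
  refine ⟨by rw [key, hm1], ?_⟩
  rintro x rfl
  refine ⟨2 + (x - 2) ^ 2 * Sr k x ^ 2, by nlinarith [mul_nonneg (sq_nonneg (x-2)) (sq_nonneg (Sr k x))], ?_⟩
  rw [key]
  rw [hs, S_real]
  push_cast
  ring
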